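/- For any point a ∈ S², the punctured sphere S² \ {a} has the Phragmen–Brouwer Property. -/

import Mathlib

def PhragmenBrouwer (X : Type*) [TopologicalSpace X] : Prop :=
  ConnectedSpace X ∧
    ∀ D E : Set X, IsClosed D → IsClosed E → Disjoint D E →
      ∀ a b : X, a ∉ D ∪ E → b ∉ D ∪ E →
        b ∈ connectedComponentIn Dᶜ a → b ∈ connectedComponentIn Eᶜ a →
          b ∈ connectedComponentIn (D ∪ E)ᶜ a

open Set Real unitInterval

attribute [local instance] Path.Homotopic.setoid

/-- A preconnected set of reals consisting of integers is a subsingleton. -/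
lemma PBP.int_subsingleton {S : Set ℝ} (hS : IsPreconnected S)
    (h : S ⊆ Set.range ((↑) : ℤ → ℝ)) : S.Subsingleton := by
  have key : ∀ x ∈ S, ∀ y ∈ S, ∀ m n : ℤ, (m : ℝ) = x → (n : ℝ) = y → m < n → False := by
    intro x hx y hy m n hm hn hlt
    have hz : ((m : ℝ) + 1/2) ∈ Set.Icc x y := by
      constructor
      · rw [← hm]; linarith
      · rw [← hn]
        have : (m : ℝ) + 1 ≤ n := by exact_mod_cast hlt
        linarith
    obtain ⟨k, hk⟩ := h (hS.Icc_subset hx hy hz)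
    have h2 : (2 * k : ℝ) = 2 * m + 1 := by linarith
    have h3 : (2 * k : ℤ) = 2 * m + 1 := by exact_mod_cast h2
    omega
  intro x hx y hy
  by_contra hxy
  obtain ⟨m, hm⟩ := h hx
  obtain ⟨n, hn⟩ := h hy
  have hmn : m ≠ n := by rintro rfl; exact hxy (hm ▸ hn ▸ rfl)
  rcases hmn.lt_or_gt with hlt | hlt
  · exact key x hx y hy m n hm hn hlt
  · exact key y hy x hx n m hn hm hlt

/-- A continuous real function on a preconnected space whose composition with `Circle.exp`
is constant is itself constant. -/
lemma PBP.eq_of_exp_comp_const {T : Type*} [TopologicalSpace T] [PreconnectedSpace T]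
    {φ : T → ℝ} (hφ : Continuous φ) {c : Circle} (h : ∀ t, Circle.exp (φ t) = c)
    (s t : T) : φ s = φ t := by
  have hπ : (0:ℝ) < 2 * π := by positivity
  have hr : ∀ u : T, (φ u - φ s) / (2 * π) ∈ Set.range ((↑) : ℤ → ℝ) := by
    intro u
    obtain ⟨m, hm⟩ := Circle.exp_eq_exp.1 ((h u).trans (h s).symm)
    refine ⟨m, ?_⟩
    rw [hm]
    field_simp
    ring
  have hcont : Continuous fun u : T => (φ u - φ s) / (2 * π) :=
    (hφ.sub continuous_const).div_const _
  have hsub := PBP.int_subsingleton (isPreconnected_range hcont)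
    (Set.range_subset_iff.2 hr) (Set.mem_range_self t) (Set.mem_range_self s)
  have h0 : (φ t - φ s) / (2 * π) = (φ s - φ s) / (2 * π) := hsub
  field_simp at h0
  linarith

lemma PBP.exp_sum {ι : Type*} (s : Finset ι) (f : ι → ℝ) :
    Circle.exp (∑ i ∈ s, f i) = ∏ i ∈ s, Circle.exp (f i) := by
  classical
  induction s using Finset.induction_on with
  | empty => simp
  | insert _ _ h ih => rw [Finset.sum_insert h, Finset.prod_insert h, Circle.exp_add, ih]

/-- Every continuous map from the unit square to the circle lifts through `Circle.exp`. -/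
lemma PBP.exists_circle_lift (G : C(I × I, Circle)) :
    ∃ L : I × I → ℝ, Continuous L ∧ ∀ p, Circle.exp (L p) = G p := by
  classical
  obtain ⟨δ, hδ0, hδ⟩ := Metric.uniformContinuous_iff.1
    (CompactSpace.uniformContinuous_of_continuous G.continuous) 2 (by norm_num)
  obtain ⟨N, hN⟩ := exists_nat_gt (1/δ)
  have hN0 : (0:ℝ) < N := lt_trans (by positivity) hN
  set c : ℕ → ℝ := fun k => min ((k:ℝ)/N) 1 with hc
  have hc01 : ∀ k, c k ∈ Set.Icc (0:ℝ) 1 :=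
    fun k => ⟨le_min (by positivity) zero_le_one, min_le_right _ _⟩
  set μ : ℕ → I × I → I × I := fun k p =>
    (⟨c k * (p.1 : ℝ), unitInterval.mul_mem (hc01 k) p.1.2⟩,
     ⟨c k * (p.2 : ℝ), unitInterval.mul_mem (hc01 k) p.2.2⟩) with hμ
  have hμcont : ∀ k, Continuous (μ k) := by
    intro k
    refine Continuous.prodMk ?_ ?_
    · exact (continuous_const.mul (continuous_subtype_val.comp continuous_fst)).subtype_mk _
    · exact (continuous_const.mul (continuous_subtype_val.comp continuous_snd)).subtype_mk _
  have hμ0 : ∀ p, μ 0 p = ((0:I), (0:I)) := by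
    intro p
    have h0 : c 0 = 0 := by simp [hc]
    refine Prod.ext (Subtype.ext ?_) (Subtype.ext ?_) <;> simp [hμ, h0]
  have hμN : ∀ p, μ N p = p := by
    intro p
    have hcN : c N = 1 := by
      simp [hc, div_self (ne_of_gt hN0)]
    refine Prod.ext (Subtype.ext ?_) (Subtype.ext ?_) <;> simp [hμ, hcN]
  have h1N : 1/(N:ℝ) < δ := by
    rw [div_lt_iff₀ hN0]
    calc (1:ℝ) = δ * (1/δ) := by field_simp
    _ < δ * N := by exact mul_lt_mul_of_pos_left hN hδ0
  have hstep : ∀ k (p : I × I), dist (μ (k+1) p) (μ k p) < δ := by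
    intro k p
    have h1 : c k ≤ c (k+1) := by
      apply min_le_min _ le_rfl
      gcongr
      exact_mod_cast Nat.le_succ k
    have h2 : c (k+1) ≤ c k + 1/N := by
      rcases le_total ((k:ℝ)/N) 1 with h | h
      · have hck : c k = (k:ℝ)/N := min_eq_left h
        rw [hck]
        calc c (k+1) ≤ ((k+1:ℕ):ℝ)/N := min_le_left _ _
        _ = (k:ℝ)/N + 1/N := by push_cast; ring
      · have hck : c k = 1 := min_eq_right h
        rw [hck]
        calc c (k+1) ≤ 1 := min_le_right _ _
        _ ≤ 1 + 1/N := le_add_of_nonneg_right (by positivity)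
    have hcd : |c (k+1) - c k| ≤ 1/N := abs_le.2 ⟨by linarith [hc01 k, hc01 (k+1), (by positivity : (0:ℝ) ≤ 1/(N:ℝ))], by linarith⟩
    have hbound : ∀ x : I, |c (k+1) * (x:ℝ) - c k * x| < δ := by
      intro x
      have hx1 : |(x:ℝ)| ≤ 1 := abs_le.2 ⟨by linarith [x.2.1], x.2.2⟩
      calc |c (k+1) * (x:ℝ) - c k * x| = |c (k+1) - c k| * |(x:ℝ)| := by
            rw [← abs_mul]; ring_nf
      _ ≤ 1/N * 1 := mul_le_mul hcd hx1 (abs_nonneg _) (by positivity)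
      _ = 1/N := mul_one _
      _ < δ := h1N
    rw [Prod.dist_eq]
    apply max_lt
    · rw [Subtype.dist_eq, Real.dist_eq]
      exact hbound p.1
    · rw [Subtype.dist_eq, Real.dist_eq]
      exact hbound p.2
  have hne : ∀ k (p : I × I), ((G (μ (k+1) p) / G (μ k p) : Circle) : ℂ) ≠ -1 := by
    intro k p h
    have h2 : dist (G (μ (k+1) p)) (G (μ k p)) < 2 := hδ (hstep k p)
    have hw : (G (μ k p) : ℂ) ≠ 0 := Circle.coe_ne_zero _
    have hz : (G (μ (k+1) p) : ℂ) = - (G (μ k p) : ℂ) := by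
      have h' : (G (μ (k+1) p) : ℂ) / (G (μ k p) : ℂ) = -1 := by
        rw [← Circle.coe_div]; exact h
      field_simp at h'
      linear_combination h'
    rw [show dist (G (μ (k+1) p)) (G (μ k p)) = dist (G (μ (k+1) p) : ℂ) (G (μ k p) : ℂ) from rfl, hz, Complex.dist_eq] at h2
    have : ‖-(G (μ k p) : ℂ) - (G (μ k p) : ℂ)‖ = 2 := by
      rw [show -(G (μ k p) : ℂ) - (G (μ k p) : ℂ) = (-2) * (G (μ k p) : ℂ) by ring]
      rw [norm_mul]
      simp [Circle.norm_coe]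
    rw [this] at h2
    exact lt_irrefl _ h2
  set L : I × I → ℝ := fun p =>
    Complex.arg (G ((0:I), (0:I))) +
      ∑ k ∈ Finset.range N, Complex.arg ((G (μ (k+1) p) / G (μ k p) : Circle)) with hL
  have harg : ∀ k (p : I × I),
      ContinuousAt Complex.arg ((G (μ (k+1) p) / G (μ k p) : Circle) : ℂ) := by
    intro k p
    apply Complex.continuousAt_arg
    set z : ℂ := ((G (μ (k+1) p) / G (μ k p) : Circle) : ℂ) with hz
    rcases eq_or_ne z.im 0 with him | him
    · left
      have habs : ‖z‖ = 1 := Circle.norm_coe _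
      have hzre : z = (z.re : ℂ) := Complex.ext rfl (by simpa using him)
      have hre1 : |z.re| = 1 := by
        rw [← Real.norm_eq_abs, ← Complex.norm_real, ← hzre, habs]
      rcases abs_eq (by norm_num : (0:ℝ) ≤ 1) |>.1 hre1 with h1 | h1
      · rw [h1]; norm_num
      · exfalso
        apply hne k p
        show z = -1
        rw [hzre, h1]
        norm_num
    · right; exact him
  refine ⟨L, ?_, ?_⟩
  · apply continuous_const.add
    apply continuous_finset_sum
    intro k _
    have hq : Continuous fun p : I × I => ((G (μ (k+1) p) / G (μ k p) : Circle) : ℂ) := by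
      apply continuous_subtype_val.comp
      exact (G.continuous.comp (hμcont (k+1))).div' (G.continuous.comp (hμcont k))
    exact continuous_iff_continuousAt.2 fun p =>
      ContinuousAt.comp (g := Complex.arg)
        (f := fun p : I × I => ((G (μ (k+1) p) / G (μ k p) : Circle) : ℂ))
        (harg k p) hq.continuousAt
  · intro p
    rw [hL]
    rw [Circle.exp_add, PBP.exp_sum, Circle.exp_arg]
    have hterm : ∀ k ∈ Finset.range N,
        Circle.exp (Complex.arg ((G (μ (k+1) p) / G (μ k p) : Circle) : ℂ))
          = G (μ (k+1) p) / G (μ k p) := fun k _ => Circle.exp_arg _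
    rw [Finset.prod_congr rfl hterm, Finset.prod_range_div (fun k => G (μ k p))]
    rw [hμN, hμ0]
    rw [← mul_div_assoc, mul_comm (G ((0:I),(0:I))) (G p), mul_div_assoc, div_self', mul_one]

/-- The Phragmen–Brouwer property for a normal, locally path-connected,
simply connected space. -/
theorem PBP.main (X : Type*) [TopologicalSpace X] [NormalSpace X]
    [LocallyPathConnectedSpace X] [SimplyConnectedSpace X] : PhragmenBrouwer X := by
  classical
  refine ⟨inferInstance, ?_⟩
  intro D E hD hE hDE a b haDE hbDE hbD hbE
  by_contra hb
  have haD : a ∈ Dᶜ := fun h => haDE (Or.inl h)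
  have haE : a ∈ Eᶜ := fun h => haDE (Or.inr h)
  set W : Set X := (D ∪ E)ᶜ with hW
  have hWopen : IsOpen W := (hD.union hE).isOpen_compl
  have haW : a ∈ W := haDE
  have hbW : b ∈ W := hbDE
  set A := connectedComponentIn W a with hA
  have haA : a ∈ A := mem_connectedComponentIn haW
  have hAopen : IsOpen A := hWopen.connectedComponentIn
  set B := W \ A with hB
  have hbB : b ∈ B := ⟨hbW, hb⟩
  have hBopen : IsOpen B := by
    have hBeq : B = ⋃ y ∈ B, connectedComponentIn W y := by
      apply Subset.antisymm
      · intro y hy; exact mem_biUnion hy (mem_connectedComponentIn hy.1)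
      · intro z hz
        obtain ⟨y, hyB, hzy⟩ := mem_iUnion₂.1 hz
        refine ⟨connectedComponentIn_subset _ _ hzy, fun hzA => hyB.2 ?_⟩
        have h1 : connectedComponentIn W z = A := (connectedComponentIn_eq hzA).symm
        have h2 : connectedComponentIn W z = connectedComponentIn W y :=
          (connectedComponentIn_eq hzy).symm
        have h3 := mem_connectedComponentIn hyB.1
        rwa [← h2, h1] at h3
    rw [hBeq]; exact isOpen_biUnion fun y _ => hWopen.connectedComponentIn
  have hABdisj : ∀ x, x ∈ A → x ∉ B := fun x hx hxB => hxB.2 hx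
  have hfrB : frontier B ⊆ D ∪ E := by
    intro x hx
    rw [hBopen.frontier_eq] at hx
    have hxA : x ∉ A := by
      intro hxA
      have : x ∈ closure B := hx.1
      have hBA : B ⊆ Aᶜ := fun y hy => hy.2
      have := closure_minimal hBA (isClosed_compl_iff.2 hAopen) this
      exact this hxA
    by_contra hxDE
    exact hx.2 ⟨hxDE, hxA⟩
  obtain ⟨g, hg0, hg1, hg01⟩ := exists_continuous_zero_one_of_isClosed hD hE hDE
  set f : X → Circle :=
    B.piecewise (fun x => Circle.exp (-π * g x)) (fun x => Circle.exp (π * g x)) with hf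
  have hfB : ∀ x ∈ B, f x = Circle.exp (-π * g x) :=
    fun x hx => Set.piecewise_eq_of_mem _ _ _ hx
  have hfnB : ∀ x ∉ B, f x = Circle.exp (π * g x) :=
    fun x hx => Set.piecewise_eq_of_notMem _ _ _ hx
  have hfc : Continuous f := by
    apply Continuous.piecewise
    · intro x hx
      rcases hfrB hx with hxD | hxE
      · have hgx : g x = 0 := by simpa using hg0 hxD
        rw [hgx]
        norm_num
      · have hgx : g x = 1 := by simpa using hg1 hxE
        rw [hgx]
        exact Circle.exp_eq_exp.2 ⟨-1, by push_cast; ring⟩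
    · exact Circle.exp.continuous.comp (continuous_const.mul g.continuous)
    · exact Circle.exp.continuous.comp (continuous_const.mul g.continuous)
  -- paths avoiding D and E
  have getPath : ∀ (S : Set X), IsClosed S → a ∈ Sᶜ → b ∈ connectedComponentIn Sᶜ a →
      ∃ γ : Path a b, ∀ t, γ t ∈ Sᶜ := by
    intro S hS haS hbS
    have hSo : IsOpen Sᶜ := hS.isOpen_compl
    have hconn : IsConnected (connectedComponentIn Sᶜ a) :=
      (isConnected_connectedComponentIn_iff).2 haS
    have hpath : IsPathConnected (connectedComponentIn Sᶜ a) :=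
      (hSo.connectedComponentIn.isConnected_iff_isPathConnected).1 hconn
    have hJ : JoinedIn Sᶜ a b :=
      (hpath.joinedIn a (mem_connectedComponentIn haS) b hbS).mono
        (connectedComponentIn_subset _ _)
    obtain ⟨γ, hγ⟩ := hJ
    exact ⟨γ, hγ⟩
  obtain ⟨α, hα⟩ := getPath D hD haD hbD
  obtain ⟨β, hβ⟩ := getPath E hE haE hbE
  have hhom : α.Homotopic β := SimplyConnectedSpace.paths_homotopic α β
  obtain ⟨H⟩ := hhom
  obtain ⟨L, hLc, hLe⟩ := PBP.exists_circle_lift ⟨fun p => f (H p), hfc.comp H.continuous⟩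
  simp only [ContinuousMap.coe_mk] at hLe
  -- key winding computations along paths
  have keyD : ∀ (γ : Path a b), (∀ t, γ t ∈ Dᶜ) → ∀ ℓ : I → ℝ, Continuous ℓ →
      (∀ t, Circle.exp (ℓ t) = f (γ t)) →
      ℓ 0 - π * g a = ℓ 1 + π * g b - 2 * π := by
    intro γ hγ ℓ hℓc hℓe
    set φ : I → ℝ := (γ ⁻¹' B).piecewise (fun t => ℓ t + π * g (γ t) - 2*π)
      (fun t => ℓ t - π * g (γ t)) with hφ
    have hφc : Continuous φ := by
      apply Continuous.piecewise
      · intro t ht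
        rw [(hBopen.preimage γ.continuous).frontier_eq] at ht
        have h2 : γ t ∈ closure B := γ.continuous.closure_preimage_subset B ht.1
        have h3 : γ t ∉ B := ht.2
        have h4 : γ t ∈ D ∪ E := hfrB (by rw [hBopen.frontier_eq]; exact ⟨h2, h3⟩)
        have h5 : γ t ∈ E := h4.resolve_left (fun h => hγ t h)
        have h6 : g (γ t) = 1 := by simpa using hg1 h5
        rw [h6]; ring
      · exact (hℓc.add (continuous_const.mul (g.continuous.comp γ.continuous))).sub
          continuous_const
      · exact hℓc.sub (continuous_const.mul (g.continuous.comp γ.continuous))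
    have hφ1 : ∀ t, Circle.exp (φ t) = 1 := by
      intro t
      by_cases hBt : γ t ∈ B
      · have hval : φ t = ℓ t + (π * g (γ t) - 2*π) := by
          rw [hφ, Set.piecewise_eq_of_mem _ _ _ (by exact hBt : t ∈ γ ⁻¹' B)]; ring
        rw [hval, Circle.exp_add, hℓe t, hfB _ hBt, ← Circle.exp_add]
        rw [show -π * g (γ t) + (π * g (γ t) - 2*π) = -(2*π) by ring]
        simp
      · have hval : φ t = ℓ t + (-(π * g (γ t))) := by
          rw [hφ, Set.piecewise_eq_of_notMem _ _ _ (by exact hBt : t ∉ γ ⁻¹' B)]; ring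
        rw [hval, Circle.exp_add, hℓe t, hfnB _ hBt, ← Circle.exp_add]
        rw [show π * g (γ t) + -(π * g (γ t)) = 0 by ring]
        simp
    have hconst : φ 0 = φ 1 := PBP.eq_of_exp_comp_const hφc hφ1 0 1
    have h0 : φ 0 = ℓ 0 - π * g a := by
      have hγ0 : γ 0 = a := γ.source
      have : (0:I) ∉ γ ⁻¹' B := by
        simp only [Set.mem_preimage, hγ0]
        exact hABdisj a haA
      rw [hφ, Set.piecewise_eq_of_notMem _ _ _ this, hγ0]
    have h1 : φ 1 = ℓ 1 + π * g b - 2*π := by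
      have hγ1 : γ 1 = b := γ.target
      have : (1:I) ∈ γ ⁻¹' B := by
        simp only [Set.mem_preimage, hγ1]
        exact hbB
      rw [hφ, Set.piecewise_eq_of_mem _ _ _ this, hγ1]
    rw [← h0, ← h1]; exact hconst
  have keyE : ∀ (γ : Path a b), (∀ t, γ t ∈ Eᶜ) → ∀ ℓ : I → ℝ, Continuous ℓ →
      (∀ t, Circle.exp (ℓ t) = f (γ t)) →
      ℓ 0 - π * g a = ℓ 1 + π * g b := by
    intro γ hγ ℓ hℓc hℓe
    set φ : I → ℝ := (γ ⁻¹' B).piecewise (fun t => ℓ t + π * g (γ t))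
      (fun t => ℓ t - π * g (γ t)) with hφ
    have hφc : Continuous φ := by
      apply Continuous.piecewise
      · intro t ht
        rw [(hBopen.preimage γ.continuous).frontier_eq] at ht
        have h2 : γ t ∈ closure B := γ.continuous.closure_preimage_subset B ht.1
        have h3 : γ t ∉ B := ht.2
        have h4 : γ t ∈ D ∪ E := hfrB (by rw [hBopen.frontier_eq]; exact ⟨h2, h3⟩)
        have h5 : γ t ∈ D := h4.resolve_right (fun h => hγ t h)
        have h6 : g (γ t) = 0 := by simpa using hg0 h5
        rw [h6]; ring
      · exact hℓc.add (continuous_const.mul (g.continuous.comp γ.continuous))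
      · exact hℓc.sub (continuous_const.mul (g.continuous.comp γ.continuous))
    have hφ1 : ∀ t, Circle.exp (φ t) = 1 := by
      intro t
      by_cases hBt : γ t ∈ B
      · have hval : φ t = ℓ t + π * g (γ t) := by
          rw [hφ, Set.piecewise_eq_of_mem _ _ _ (by exact hBt : t ∈ γ ⁻¹' B)]
        rw [hval, Circle.exp_add, hℓe t, hfB _ hBt, ← Circle.exp_add]
        rw [show -π * g (γ t) + π * g (γ t) = 0 by ring]
        simp
      · have hval : φ t = ℓ t + (-(π * g (γ t))) := by
          rw [hφ, Set.piecewise_eq_of_notMem _ _ _ (by exact hBt : t ∉ γ ⁻¹' B)]; ring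
        rw [hval, Circle.exp_add, hℓe t, hfnB _ hBt, ← Circle.exp_add]
        rw [show π * g (γ t) + -(π * g (γ t)) = 0 by ring]
        simp
    have hconst : φ 0 = φ 1 := PBP.eq_of_exp_comp_const hφc hφ1 0 1
    have h0 : φ 0 = ℓ 0 - π * g a := by
      have hγ0 : γ 0 = a := γ.source
      have : (0:I) ∉ γ ⁻¹' B := by
        simp only [Set.mem_preimage, hγ0]
        exact hABdisj a haA
      rw [hφ, Set.piecewise_eq_of_notMem _ _ _ this, hγ0]
    have h1 : φ 1 = ℓ 1 + π * g b := by
      have hγ1 : γ 1 = b := γ.target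
      have : (1:I) ∈ γ ⁻¹' B := by
        simp only [Set.mem_preimage, hγ1]
        exact hbB
      rw [hφ, Set.piecewise_eq_of_mem _ _ _ this, hγ1]
    rw [← h0, ← h1]; exact hconst
  -- the four edges of the lifted square
  have hℓαc : Continuous fun t : I => L (0, t) :=
    hLc.comp (continuous_const.prodMk continuous_id)
  have hℓβc : Continuous fun t : I => L (1, t) :=
    hLc.comp (continuous_const.prodMk continuous_id)
  have hℓαe : ∀ t, Circle.exp (L (0, t)) = f (α t) := by
    intro t
    rw [hLe (0, t), H.apply_zero t]
    rfl
  have hℓβe : ∀ t, Circle.exp (L (1, t)) = f (β t) := by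
    intro t
    rw [hLe (1, t), H.apply_one t]
    rfl
  have eqα := keyD α hα (fun t => L (0, t)) hℓαc hℓαe
  have eqβ := keyE β hβ (fun t => L (1, t)) hℓβc hℓβe
  have hside0 : L (0, 0) = L (1, 0) := by
    have hc : Continuous fun s : I => L (s, 0) :=
      hLc.comp (continuous_id.prodMk continuous_const)
    exact PBP.eq_of_exp_comp_const hc (c := f a)
      (fun s => by rw [hLe (s, 0), H.source s]) 0 1
  have hside1 : L (0, 1) = L (1, 1) := by
    have hc : Continuous fun s : I => L (s, 1) :=
      hLc.comp (continuous_id.prodMk continuous_const)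
    exact PBP.eq_of_exp_comp_const hc (c := f b)
      (fun s => by rw [hLe (s, 1), H.target s]) 0 1
  have hπ : (0:ℝ) < π := Real.pi_pos
  linarith [eqα, eqβ, hside0, hside1]

theorem punctured_sphere_pbp (a : EuclideanSpace ℝ (Fin 3))
    (ha : a ∈ Metric.sphere (0 : EuclideanSpace ℝ (Fin 3)) 1) :
    PhragmenBrouwer ((Metric.sphere (0 : EuclideanSpace ℝ (Fin 3)) 1 \ {a} :
      Set (EuclideanSpace ℝ (Fin 3)))) := by
  have hv : ‖a‖ = 1 := mem_sphere_zero_iff_norm.mp ha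
  let v' : Metric.sphere (0 : EuclideanSpace ℝ (Fin 3)) 1 := ⟨a, by simp [hv]⟩
  have e1 : ((Metric.sphere (0 : EuclideanSpace ℝ (Fin 3)) 1 \ {a} :
      Set (EuclideanSpace ℝ (Fin 3)))) ≃ₜ
      (({v'}ᶜ : Set (Metric.sphere (0 : EuclideanSpace ℝ (Fin 3)) 1))) := by
    refine Homeomorph.mk (Equiv.mk
      (fun x => ⟨⟨x.1, x.2.1⟩, fun h => x.2.2 (by
        simpa using congrArg Subtype.val h)⟩)
      (fun y => ⟨y.1.1, y.1.2, fun h => y.2 (Subtype.ext (by simpa using h))⟩)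
      (fun x => rfl) (fun y => rfl)) ?_ ?_
    · exact Continuous.subtype_mk (Continuous.subtype_mk continuous_subtype_val _) _
    · exact Continuous.subtype_mk (continuous_subtype_val.comp continuous_subtype_val) _
  have hsource : (stereographic hv).source =
      (({v'}ᶜ : Set (Metric.sphere (0 : EuclideanSpace ℝ (Fin 3)) 1))) :=
    stereographic_source hv
  have e2 : (({v'}ᶜ : Set (Metric.sphere (0 : EuclideanSpace ℝ (Fin 3)) 1))) ≃ₜ
      ((ℝ ∙ a)ᗮ : Submodule ℝ (EuclideanSpace ℝ (Fin 3))) :=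
    ((Homeomorph.setCongr hsource.symm).trans
      (stereographic hv).toHomeomorphSourceTarget).trans
      ((Homeomorph.setCongr (stereographic_target hv)).trans (Homeomorph.Set.univ _))
  have e := e1.trans e2
  have h1 : LocallyPathConnectedSpace
      ((Metric.sphere (0 : EuclideanSpace ℝ (Fin 3)) 1 \ {a} :
      Set (EuclideanSpace ℝ (Fin 3)))) := e.isOpenEmbedding.locPathConnectedSpace
  have h2 : ContractibleSpace
      ((Metric.sphere (0 : EuclideanSpace ℝ (Fin 3)) 1 \ {a} :
      Set (EuclideanSpace ℝ (Fin 3)))) := e.contractibleSpace_iff.mpr inferInstance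
  exact PBP.main _
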